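/- Let k ≥ 1 and 0 ≤ i < k be integers, and define bit_i : ℤ_{2^k} → {−1,1} by bit_i(x) = (−1)^{x_i}, where x = Σ_{j=0}^{k−1} x_j·2^j is the binary expansion of the representative of x in {0,…,2^k−1}. Then for every α ∈ ℤ_{2^k}: the Fourier coefficient bit_i^(α) = 0 unless α is an odd multiple of 2^{k−i−1} (i.e., α ≡ m·2^{k−i−1} mod 2^k for some odd integer m); and whenever bit_i^(α) ≠ 0, one has |bit_i^(α)| ≤ 2^{k−i} / | |α|_{2^k} |, where |α|_{2^k} denotes the unique integer in (−2^{k−1}, 2^{k−1}] congruent to α modulo 2^k. -/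

import Mathlib

open Finset Complex

noncomputable def dft {N : ℕ} [NeZero N] (f : ZMod N → ℂ) (a : ZMod N) : ℂ :=
  (N : ℂ)⁻¹ * ∑ x : ZMod N,
    f x * Complex.exp (-(2 * (Real.pi : ℂ) * Complex.I * (a.val : ℂ) * (x.val : ℂ) / (N : ℂ)))

noncomputable def bitFn (k i : ℕ) : ZMod (2 ^ k) → ℂ := fun x =>
  if Nat.testBit x.val i then -1 else 1

lemma aux_sum_range_mul {β : Type*} [AddCommMonoid β] (F : ℕ → β) (K : ℕ) :
    ∀ M, ∑ x ∈ Finset.range (K * M), F x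
      = ∑ s ∈ Finset.range M, ∑ r ∈ Finset.range K, F (K * s + r) := by
  intro M
  induction M with
  | zero => simp
  | succ M ih =>
      rw [Nat.mul_succ, Finset.sum_range_add, ih, Finset.sum_range_succ]

lemma aux_abs_one_sub_exp (θ : ℝ) :
    ‖1 - Complex.exp (θ * Complex.I)‖ = 2 * |Real.sin (θ / 2)| := by
  have e1 : Complex.exp ((θ/2 : ℝ) * I) * Complex.exp (-(θ/2 : ℝ) * I) = 1 := by
    rw [← Complex.exp_add]; norm_num
  have e2 : Complex.exp ((θ/2 : ℝ) * I) * Complex.exp ((θ/2 : ℝ) * I) = Complex.exp (θ * I) := by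
    rw [← Complex.exp_add]; congr 1; push_cast; ring
  have key : 1 - Complex.exp (θ * I)
      = Complex.exp ((θ/2 : ℝ) * I) * (-2 * Complex.I) * Complex.sin ((θ/2 : ℝ)) := by
    rw [Complex.sin]
    linear_combination -e1 + e2 + (Complex.exp ((θ/2:ℝ)*I) * (Complex.exp (-(θ/2:ℝ)*I) - Complex.exp ((θ/2:ℝ)*I))) * Complex.I_sq
  rw [key]
  rw [norm_mul, norm_mul, Complex.norm_exp_ofReal_mul_I, ← Complex.ofReal_sin, Complex.norm_real]
  simp

/-- Fourier coefficients of the `i`-th bit function on `ℤ_{2^k}`: `bit_i^(α) = 0`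
unless `α` is an odd multiple of `2^{k−i−1}`, and every nonzero coefficient
satisfies `|bit_i^(α)| ≤ 2^{k−i}/| |α|_{2^k} |`. -/
theorem stmt14 (k i : ℕ) (hk : 1 ≤ k) (hik : i < k) (α : ZMod (2 ^ k)) :
    ((¬ ∃ m : ℤ, Odd m ∧ α = ((m : ZMod (2 ^ k)) * 2 ^ (k - i - 1))) →
        dft (bitFn k i) α = 0)
    ∧ (dft (bitFn k i) α ≠ 0 →
        ‖dft (bitFn k i) α‖
          ≤ 2 ^ (k - i) / ((α.valMinAbs.natAbs : ℝ))) := by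
  have hNeZero : NeZero (2 ^ k) := ⟨by positivity⟩
  have hN0 : 0 < 2 ^ k := Nat.pow_pos (by norm_num)
  have hNC : ((2 ^ k : ℕ) : ℂ) ≠ 0 := by exact_mod_cast hN0.ne'
  set a : ℕ := α.val with hadef
  have haN : a < 2 ^ k := ZMod.val_lt α
  set w : ℂ := -(2 * (Real.pi : ℂ) * Complex.I * (a : ℂ) / ((2 ^ k : ℕ) : ℂ)) with hwdef
  set q : ℂ := Complex.exp w with hqdef
  set p : ℂ := -(q ^ (2 ^ i)) with hpdef
  have hKM : 2 ^ i * 2 ^ (k - i) = 2 ^ k := by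
    rw [← pow_add]; congr 1; omega
  -- the main sum formula
  have hsum : dft (bitFn k i) α
      = (((2 ^ k : ℕ) : ℂ))⁻¹ *
        ((∑ s ∈ Finset.range (2 ^ (k - i)), p ^ s) * ∑ r ∈ Finset.range (2 ^ i), q ^ r) := by
    rw [dft]
    congr 1
    have h1 : ∑ x : ZMod (2 ^ k), bitFn k i x *
          Complex.exp (-(2 * (Real.pi : ℂ) * Complex.I * (a : ℂ) * ((x.val : ℕ) : ℂ) / ((2 ^ k : ℕ) : ℂ)))
        = ∑ x ∈ Finset.range (2 ^ k), (if Nat.testBit x i then (-1 : ℂ) else 1) * q ^ x := by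
      apply Finset.sum_nbij' (fun (x : ZMod (2 ^ k)) => x.val)
        (fun (x : ℕ) => ((x : ℕ) : ZMod (2 ^ k)))
      · intro x _; exact Finset.mem_range.mpr (ZMod.val_lt x)
      · intro x _; exact Finset.mem_univ _
      · intro x _; exact ZMod.natCast_rightInverse x
      · intro x hx; exact ZMod.val_cast_of_lt (Finset.mem_range.mp hx)
      · intro x _
        rw [bitFn]
        congr 1
        rw [hqdef, ← Complex.exp_nat_mul]
        congr 1
        rw [hwdef]
        field_simp
    rw [h1, show (2 : ℕ) ^ k = 2 ^ i * 2 ^ (k - i) from hKM.symm, aux_sum_range_mul,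
      Finset.sum_mul]
    apply Finset.sum_congr rfl
    intro s _
    rw [Finset.mul_sum]
    apply Finset.sum_congr rfl
    intro r hr
    have hrK : r < 2 ^ i := Finset.mem_range.mp hr
    rw [Nat.testBit_two_pow_mul_add s hrK i, if_neg (lt_irrefl i), Nat.sub_self,
      Nat.testBit_zero, pow_add, pow_mul, hpdef, neg_pow]
    rcases Nat.even_or_odd s with hs | hs
    · rw [if_neg (by simp [Nat.even_iff.mp hs]), Even.neg_one_pow hs, one_mul, one_mul]
    · rw [if_pos (by simp [Nat.odd_iff.mp hs]), Odd.neg_one_pow hs]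
      ring
  have hqN : q ^ (2 ^ k) = 1 := by
    rw [hqdef, ← Complex.exp_nat_mul]
    have : ((2 ^ k : ℕ) : ℂ) * w = (-(a : ℤ) : ℤ) * (2 * Real.pi * Complex.I) := by
      rw [hwdef]; push_cast; field_simp
    rw [this, Complex.exp_int_mul_two_pi_mul_I]
  have hpM : p ^ (2 ^ (k - i)) = 1 := by
    rw [hpdef, neg_pow, ← pow_mul, hKM, hqN, mul_one]
    exact Even.neg_one_pow (by
      refine (Nat.even_pow' ?_).mpr (by norm_num)
      omega)
  by_cases hp : p = 1
  · -- nonzero case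
    have hq2 : q ^ (2 ^ i) = -1 := by
      have h := hp.symm; rw [hpdef] at h
      linear_combination h
    have hqne1 : q ≠ 1 := by
      intro h; rw [h, one_pow] at hq2; norm_num at hq2
    -- existence of odd m
    have hex : ∃ m : ℤ, Odd m ∧ α = ((m : ZMod (2 ^ k)) * 2 ^ (k - i - 1)) := by
      have he : Complex.exp (((2 ^ i : ℕ) : ℂ) * w) = -1 := by
        rw [Complex.exp_nat_mul, ← hqdef]; exact_mod_cast hq2
      have h1 : Complex.exp (((2 ^ i : ℕ) : ℂ) * w - Real.pi * Complex.I) = 1 := by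
        rw [Complex.exp_sub, he, Complex.exp_pi_mul_I]
        norm_num
      obtain ⟨n, hn⟩ := Complex.exp_eq_one_iff.mp h1
      have h3 : ((-(2 * (a : ℝ) * 2 ^ i / 2 ^ k) - 1 : ℝ) : ℂ) * ((Real.pi : ℂ) * Complex.I)
          = (((2 * (n : ℝ)) : ℝ) : ℂ) * ((Real.pi : ℂ) * Complex.I) := by
        push_cast
        rw [hwdef] at hn
        push_cast at hn
        linear_combination hn
      have h4 : (-(2 * (a : ℝ) * 2 ^ i / 2 ^ k) - 1 : ℝ) = 2 * (n : ℝ) := by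
        have := mul_right_cancel₀
          (mul_ne_zero (by exact_mod_cast Real.pi_ne_zero) Complex.I_ne_zero) h3
        exact_mod_cast this
      have h2kR : (2 : ℝ) ^ k ≠ 0 := by positivity
      have h5 : (a : ℝ) * 2 ^ (i + 1) = (-(2 * (n : ℝ) + 1)) * 2 ^ k := by
        field_simp at h4
        ring_nf at h4 ⊢
        linarith
      have h6 : (a : ℤ) * 2 ^ (i + 1) = (-(2 * n + 1)) * 2 ^ k := by exact_mod_cast h5
      have h7 : (a : ℤ) = (-(2 * n + 1)) * 2 ^ (k - i - 1) := by
        have hpow : (-(2 * n + 1)) * 2 ^ (k - i - 1) * 2 ^ (i + 1) = (-(2 * n + 1)) * 2 ^ k := by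
          rw [mul_assoc, ← pow_add]
          congr 2
          omega
        refine mul_right_cancel₀ (b := (2 : ℤ) ^ (i + 1)) (by positivity) ?_
        rw [hpow]; exact h6
      refine ⟨-(2 * n + 1), ⟨-n - 1, by ring⟩, ?_⟩
      have hval : α = ((a : ℕ) : ZMod (2 ^ k)) := (ZMod.natCast_rightInverse α).symm
      rw [hval, show (((a : ℕ) : ZMod (2 ^ k))) = (((a : ℕ) : ℤ) : ZMod (2 ^ k)) by push_cast; rfl,
        h7]
      push_cast
      ring
    -- the bound
    have hbound : ‖dft (bitFn k i) α‖
        ≤ 2 ^ (k - i) / ((α.valMinAbs.natAbs : ℝ)) := by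
      set nb : ℕ := α.valMinAbs.natAbs with hnbdef
      -- nb positive
      have hnb0 : 0 < nb := by
        rcases Nat.eq_zero_or_pos nb with h | h
        · exfalso
          apply hqne1
          have hb : α.valMinAbs = 0 := Int.natAbs_eq_zero.mp h
          have hα0 : α = 0 := (ZMod.valMinAbs_eq_zero α).mp hb
          have ha0 : a = 0 := by rw [hadef, hα0, ZMod.val_zero]
          rw [hqdef, hwdef, ha0]
          push_cast
          simp
        · exact h
      -- dft value
      have hS : (∑ s ∈ Finset.range (2 ^ (k - i)), p ^ s) = ((2 ^ (k - i) : ℕ) : ℂ) := by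
        rw [hp]; simp
      have hR : (∑ r ∈ Finset.range (2 ^ i), q ^ r) = -2 / (q - 1) := by
        rw [geom_sum_eq hqne1, hq2]
        norm_num
      have hval : dft (bitFn k i) α
          = (((2 ^ k : ℕ) : ℂ))⁻¹ * (((2 ^ (k - i) : ℕ) : ℂ) * (-2 / (q - 1))) := by
        rw [hsum, hS, hR]
      -- |1 - q| as a sine
      have hq1 : ‖q - 1‖ = 2 * |Real.sin (Real.pi * a / 2 ^ k)| := by
        have hw' : w = ((-(2 * Real.pi * (a : ℝ) / 2 ^ k) : ℝ) : ℂ) * Complex.I := by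
          rw [hwdef]; push_cast; ring
        rw [← norm_neg, neg_sub, hqdef, hw', aux_abs_one_sub_exp,
          show -(2 * Real.pi * (a : ℝ) / 2 ^ k) / 2 = -(Real.pi * a / 2 ^ k) by ring,
          Real.sin_neg, abs_neg]
      set sθ : ℝ := |Real.sin (Real.pi * a / 2 ^ k)| with hsθ
      -- |sin| is the same at nb
      have hsin_eq : sθ = |Real.sin (Real.pi * nb / 2 ^ k)| := by
        have hab := ZMod.val_eq_ite_valMinAbs α
        obtain ⟨t, ht⟩ : ∃ t : ℤ, (a : ℝ) = (α.valMinAbs : ℝ) + t * 2 ^ k := by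
          by_cases hc : α.val ≤ 2 ^ k / 2
          · refine ⟨0, ?_⟩
            rw [if_pos hc] at hab
            simp only [Nat.cast_zero, add_zero] at hab
            have h' : ((a : ℕ) : ℝ) = (α.valMinAbs : ℝ) := by exact_mod_cast hab
            rw [h']; ring
          · refine ⟨1, ?_⟩
            rw [if_neg hc] at hab
            rw [← hadef] at hab
            have : (a : ℝ) = ((α.valMinAbs + 2 ^ k : ℤ) : ℝ) := by exact_mod_cast congrArg (fun z : ℤ => (z : ℝ)) hab
            rw [this]; push_cast; ring
        obtain ⟨ε, hε, hbε⟩ : ∃ ε : ℝ, (ε = 1 ∨ ε = -1) ∧ (α.valMinAbs : ℝ) = ε * nb := by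
          have hcast : ((nb : ℕ) : ℝ) = |(α.valMinAbs : ℝ)| := by
            rw [hnbdef, Nat.cast_natAbs, Int.cast_abs]
          rcases abs_choice ((α.valMinAbs : ℝ)) with h | h
          · exact ⟨1, Or.inl rfl, by rw [one_mul, hcast, h]⟩
          · exact ⟨-1, Or.inr rfl, by rw [neg_one_mul, hcast, h]; ring⟩
        have harg : Real.pi * a / 2 ^ k = ε * (Real.pi * nb / 2 ^ k) + t * Real.pi := by
          have h2kR : (2 : ℝ) ^ k ≠ 0 := by positivity
          rw [ht, hbε]
          field_simp
        rw [hsθ, harg, Real.sin_add_int_mul_pi, abs_mul,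
          show |((-1 : ℝ) ^ t)| = 1 by
            rcases Int.even_or_odd t with h | h
            · rw [h.neg_one_zpow]; exact abs_one
            · rw [h.neg_one_zpow]; rw [abs_neg]; exact abs_one, one_mul]
        rcases hε with h | h
        · rw [h, one_mul]
        · rw [h, neg_one_mul, Real.sin_neg, abs_neg]
      -- lower bound for the sine
      have hnb_le : (nb : ℝ) ≤ 2 ^ k / 2 := by
        have h1 : nb ≤ 2 ^ k / 2 := ZMod.natAbs_valMinAbs_le α
        have h2 : (2 : ℕ) ^ k / 2 = 2 ^ (k - 1) := by
          rw [show (2 : ℕ) ^ k = 2 ^ (k - 1) * 2 by rw [← pow_succ]; congr 1; omega]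
          omega
        have h3 : (nb : ℝ) ≤ ((2 : ℕ) ^ (k - 1) : ℕ) := by exact_mod_cast h2 ▸ h1
        refine h3.trans ?_
        rw [show (2 : ℝ) ^ k = 2 ^ (k - 1) * 2 by rw [← pow_succ]; congr 1; omega]
        push_cast
        linarith [pow_pos (by norm_num : (0:ℝ) < 2) (k-1)]
      have h2kpos : (0 : ℝ) < 2 ^ k := by positivity
      have hsin_lb : 2 * nb / 2 ^ k ≤ sθ := by
        rw [hsin_eq]
        have hx0 : 0 ≤ Real.pi * nb / 2 ^ k := by positivity
        have hx2 : Real.pi * nb / 2 ^ k ≤ Real.pi / 2 := by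
          rw [div_le_div_iff₀ h2kpos (by norm_num)]
          nlinarith [Real.pi_pos]
        have := Real.mul_le_sin hx0 hx2
        have heq : 2 / Real.pi * (Real.pi * nb / 2 ^ k) = 2 * nb / 2 ^ k := by
          field_simp
        rw [heq] at this
        exact this.trans (le_abs_self _)
      have hspos : 0 < sθ := lt_of_lt_of_le (by positivity) hsin_lb
      -- compute the absolute value
      have habs : ‖dft (bitFn k i) α‖ = 2 ^ (k - i) / (2 ^ k * sθ) := by
        rw [hval, norm_mul, norm_mul, norm_div, norm_inv, Complex.norm_natCast,
          Complex.norm_natCast, hq1]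
        rw [show ‖(-2 : ℂ)‖ = 2 by simp]
        push_cast
        rw [eq_div_iff (by positivity)]
        field_simp
      rw [habs]
      have hkey2 : (nb : ℝ) ≤ 2 ^ k * sθ := by
        calc (nb : ℝ) ≤ 2 * nb := by linarith [(Nat.cast_pos (α := ℝ)).mpr hnb0]
          _ = 2 ^ k * (2 * nb / 2 ^ k) := by field_simp
          _ ≤ 2 ^ k * sθ := by
              apply mul_le_mul_of_nonneg_left hsin_lb (le_of_lt h2kpos)
      exact div_le_div_of_nonneg_left (by positivity) (by exact_mod_cast hnb0) hkey2
    exact ⟨fun h => absurd hex h, fun _ => hbound⟩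
  · have hz : dft (bitFn k i) α = 0 := by
      rw [hsum, geom_sum_eq hp, hpM, sub_self, zero_div, zero_mul, mul_zero]
    exact ⟨fun _ => hz, fun h => absurd hz h⟩
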